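/- Let (V,b) be a finite weighted graph with N = 2K+1 vertices (K ≥ 1), at least one edge, and no isolated vertices. Then the dual Cheeger constant satisfies h̄ ≥ (N+1)/(2N). -/

import Mathlib

open Finset

lemma count_cross {V : Type*} [Fintype V] [DecidableEq V] {K : ℕ} (hK : 1 ≤ K)
    {x y : V} (hxy : x ≠ y) :
    ((Finset.powersetCard K (Finset.univ : Finset V)).filter
        (fun A => x ∈ A ∧ y ∉ A)).card
      = (Fintype.card V - 2).choose (K - 1) := by
  have hcompl : ((({x, y} : Finset V)ᶜ).card) = Fintype.card V - 2 := by
    rw [card_compl, card_insert_of_notMem (by simp [hxy]), card_singleton]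
  rw [← hcompl, ← Finset.card_powersetCard]
  refine Finset.card_bij' (fun A _ => A.erase x) (fun B _ => insert x B) ?_ ?_ ?_ ?_
  · intro A hA
    simp only [mem_filter, mem_powersetCard] at hA
    obtain ⟨⟨-, hcard⟩, hxA, hyA⟩ := hA
    rw [mem_powersetCard]
    constructor
    · intro z hz
      simp only [mem_erase] at hz
      simp only [mem_compl, mem_insert, mem_singleton]
      rintro (rfl | rfl)
      · exact hz.1 rfl
      · exact hyA hz.2
    · rw [card_erase_of_mem hxA, hcard]
  · intro B hB
    rw [mem_powersetCard] at hB
    obtain ⟨hsub, hcard⟩ := hB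
    have hxB : x ∉ B := fun h => by simpa using hsub h
    have hyB : y ∉ B := fun h => by simpa using hsub h
    simp only [mem_filter, mem_powersetCard]
    refine ⟨⟨subset_univ _, ?_⟩, mem_insert_self _ _, ?_⟩
    · rw [card_insert_of_notMem hxB, hcard]; omega
    · simp [hxy.symm, hyB]
  · intro A hA
    simp only [mem_filter] at hA
    exact insert_erase hA.2.1
  · intro B hB
    rw [mem_powersetCard] at hB
    have hxB : x ∉ B := fun h => by simpa using hB.1 h
    exact erase_insert hxB

lemma choose_identity {K : ℕ} (hK : 1 ≤ K) :
    (2 * K + 1 + 1) * (2 * K + 1).choose K = 4 * (2 * K + 1) * (2 * K - 1).choose (K - 1) := by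
  obtain ⟨M, rfl⟩ : ∃ M, K = M + 1 := ⟨K - 1, by omega⟩
  have e1 : 2 * (M + 1) - 1 = 2 * M + 1 := by omega
  have e2 : M + 1 - 1 = M := by omega
  rw [e1, e2]
  have h1 := Nat.add_one_mul_choose_eq (2 * M + 1) M
  have h2 := Nat.choose_succ_right_eq (2 * M + 2) M
  have h3 := Nat.add_one_mul_choose_eq (2 * M + 2) M
  have e3 : 2 * M + 2 - M = M + 2 := by omega
  rw [e3] at h2
  have e4 : 2 * M + 1 + 1 = 2 * M + 2 := by omega
  have e5 : 2 * M + 2 + 1 = 2 * M + 3 := by omega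
  rw [e4] at h1
  rw [e5] at h3
  set a := (2 * M + 1).choose M
  set c := (2 * M + 2).choose (M + 1)
  set e := (2 * M + 2).choose M
  set d := (2 * M + 3).choose (M + 1)
  -- h1 : (2M+2)*a = c*(M+1), h2 : c*(M+1) = e*(M+2), h3 : (2M+3)*e = d*(M+1)
  have key : ((2 * (M + 1) + 1 + 1) * d) * ((M + 1) * (M + 2))
      = (4 * (2 * (M + 1) + 1) * a) * ((M + 1) * (M + 2)) := by
    calc ((2 * (M + 1) + 1 + 1) * d) * ((M + 1) * (M + 2))
        = (2 * M + 4) * (M + 2) * (d * (M + 1)) := by ring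
      _ = (2 * M + 4) * (M + 2) * ((2 * M + 3) * e) := by rw [h3]
      _ = (2 * M + 4) * (2 * M + 3) * (e * (M + 2)) := by ring
      _ = (2 * M + 4) * (2 * M + 3) * (c * (M + 1)) := by rw [h2]
      _ = (2 * M + 4) * (2 * M + 3) * ((2 * M + 2) * a) := by rw [h1]
      _ = (4 * (2 * (M + 1) + 1) * a) * ((M + 1) * (M + 2)) := by ring
  exact Nat.eq_of_mul_eq_mul_right (by positivity) key

theorem dual_cheeger_lower_bound_odd
    {V : Type*} [Fintype V] [DecidableEq V] {F : Type*} [Field F] [LinearOrder F] [IsStrictOrderedRing F]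
    (b : V → V → F)
    (hsymm : ∀ x y, b x y = b y x)
    (hnn : ∀ x y, 0 ≤ b x y)
    (hloop : ∀ x, b x x = 0)
    (hiso : ∀ x, 0 < ∑ y, b x y)
    (K N : ℕ) (hK : 1 ≤ K) (hN : N = 2 * K + 1)
    (hcard : Fintype.card V = N)
    (hedge : ∃ x y, 0 < b x y)
    (hbar : F)
    (hmax : IsGreatest {r : F | ∃ V1 V2 : Finset V, V1.Nonempty ∧ V2.Nonempty ∧
      Disjoint V1 V2 ∧
      r = 2 * (∑ x ∈ V1, ∑ y ∈ V2, b x y) /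
        ((∑ x ∈ V1, ∑ y, b x y) + (∑ x ∈ V2, ∑ y, b x y))} hbar) :
    ((N : F) + 1) / (2 * (N : F)) ≤ hbar := by
  classical
  set S : F := ∑ x, ∑ y, b x y with hS_def
  have hS : 0 < S := by
    refine Finset.sum_pos (fun x _ => hiso x) ?_
    exact Finset.card_pos.mp (by rw [card_univ, hcard]; omega)
  set Pw := Finset.powersetCard K (Finset.univ : Finset V) with hPw
  set m := (N - 2).choose (K - 1) with hm
  set C := N.choose K with hC
  have hCpos : 0 < C := Nat.choose_pos (by omega)
  have hPwcard : Pw.card = C := by rw [hPw, card_powersetCard, card_univ, hcard]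
  have hPwne : Pw.Nonempty := by
    rw [hPw, powersetCard_nonempty, card_univ, hcard]; omega
  -- rewrite the cut sum with indicators
  have step : ∀ A : Finset V, (∑ x ∈ A, ∑ y ∈ Aᶜ, b x y)
      = ∑ x : V, ∑ y : V, (if x ∈ A ∧ y ∉ A then b x y else 0) := by
    intro A
    have h : ∀ (s : Finset V) (f : V → F), ∑ x ∈ s, f x = ∑ x : V, if x ∈ s then f x else 0 :=
      fun s f => by rw [Finset.sum_ite_mem, Finset.univ_inter]
    rw [h A]
    refine Finset.sum_congr rfl fun x _ => ?_
    by_cases hx : x ∈ A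
    · simp only [hx, if_true, true_and]
      rw [h Aᶜ]
      exact Finset.sum_congr rfl fun y _ => by simp [Finset.mem_compl]
    · simp [hx]
  have hsum : ∑ A ∈ Pw, (∑ x ∈ A, ∑ y ∈ Aᶜ, b x y) = (m : F) * S := by
    calc ∑ A ∈ Pw, (∑ x ∈ A, ∑ y ∈ Aᶜ, b x y)
        = ∑ A ∈ Pw, ∑ x : V, ∑ y : V, (if x ∈ A ∧ y ∉ A then b x y else 0) :=
          Finset.sum_congr rfl fun A _ => step A
      _ = ∑ x : V, ∑ y : V, ∑ A ∈ Pw, (if x ∈ A ∧ y ∉ A then b x y else 0) := by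
          rw [Finset.sum_comm]
          exact Finset.sum_congr rfl fun x _ => Finset.sum_comm
      _ = ∑ x : V, ∑ y : V, ((Pw.filter (fun A => x ∈ A ∧ y ∉ A)).card : F) * b x y := by
          refine Finset.sum_congr rfl fun x _ => Finset.sum_congr rfl fun y _ => ?_
          rw [← Finset.sum_filter, Finset.sum_const, nsmul_eq_mul]
      _ = ∑ x : V, ∑ y : V, (m : F) * b x y := by
          refine Finset.sum_congr rfl fun x _ => Finset.sum_congr rfl fun y _ => ?_
          by_cases hxy : x = y
          · subst hxy; rw [hloop x, mul_zero, mul_zero]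
          · rw [hPw, count_cross hK hxy, hcard, hm]
      _ = (m : F) * S := by
          rw [hS_def]; simp_rw [← Finset.mul_sum]
  have havg : ∑ _A ∈ Pw, ((m : F) * S / (C : F)) ≤ ∑ A ∈ Pw, (∑ x ∈ A, ∑ y ∈ Aᶜ, b x y) := by
    rw [hsum, Finset.sum_const, hPwcard, nsmul_eq_mul, mul_div_cancel₀]
    positivity
  obtain ⟨A, hAPw, hAt⟩ := Finset.exists_le_of_sum_le hPwne havg
  have hAcard : A.card = K := (Finset.mem_powersetCard.mp hAPw).2
  have hA1 : A.Nonempty := Finset.card_pos.mp (by omega)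
  have hA2 : (Aᶜ).Nonempty := Finset.card_pos.mp (by rw [card_compl, hAcard, hcard]; omega)
  have hden : (∑ x ∈ A, ∑ y, b x y) + (∑ x ∈ Aᶜ, ∑ y, b x y) = S :=
    Finset.sum_add_sum_compl A _
  have hr_mem : 2 * (∑ x ∈ A, ∑ y ∈ Aᶜ, b x y) /
      ((∑ x ∈ A, ∑ y, b x y) + (∑ x ∈ Aᶜ, ∑ y, b x y)) ∈ {r : F | ∃ V1 V2 : Finset V,
      V1.Nonempty ∧ V2.Nonempty ∧ Disjoint V1 V2 ∧
      r = 2 * (∑ x ∈ V1, ∑ y ∈ V2, b x y) /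
        ((∑ x ∈ V1, ∑ y, b x y) + (∑ x ∈ V2, ∑ y, b x y))} :=
    ⟨A, Aᶜ, hA1, hA2, disjoint_compl_right, rfl⟩
  have hle : 2 * (∑ x ∈ A, ∑ y ∈ Aᶜ, b x y) / S ≤ hbar := by
    have := hmax.2 hr_mem
    rwa [hden] at this
  refine le_trans ?_ hle
  set cr : F := ∑ x ∈ A, ∑ y ∈ Aᶜ, b x y with hcr
  -- nat identity
  have hnat : (N + 1) * C = 4 * N * m := by
    rw [hm, hC, hN]
    have e : 2 * K + 1 - 2 = 2 * K - 1 := by omega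
    rw [e]
    exact choose_identity hK
  have hcast : ((N : F) + 1) * (C : F) = 4 * (N : F) * (m : F) := by
    exact_mod_cast congrArg (Nat.cast : ℕ → F) hnat
  have hCpos' : (0 : F) < (C : F) := by exact_mod_cast hCpos
  have hNpos : (0 : F) < (N : F) := by
    have : 0 < N := by omega
    exact_mod_cast this
  have hmS : (m : F) * S ≤ cr * C := by
    rw [div_le_iff₀ hCpos'] at hAt
    linarith [hAt]
  rw [div_le_div_iff₀ (by positivity) hS]
  have h6 : ((N : F) + 1) * S * C ≤ 4 * N * cr * C := by
    calc ((N : F) + 1) * S * C = 4 * (N : F) * ((m : F) * S) := by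
          linear_combination S * hcast
      _ ≤ 4 * (N : F) * (cr * C) := by
          apply mul_le_mul_of_nonneg_left hmS (by positivity)
      _ = 4 * N * cr * C := by ring
  have := le_of_mul_le_mul_right h6 hCpos'
  linarith [this]
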